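/- arXiv:2305.06848 — 2 statements merged into one kernel-verified Lean document; each statement's English description precedes it below -/
import Mathlib

section
/- Let f₁,…,fₙ : ℝ^d → ℝ be differentiable and f = (1/n)∑_{i=1}^n fᵢ. Fix x, y ∈ ℝ^d and an arbitrary vector v ∈ ℝ^d, and let I = (i₁,…,i_b) be a random batch of size b from {1,…,n}. Then E‖(1/b)∑_{j=1}^b (∇f_{i_j}(x) − ∇f_{i_j}(y)) + v − ∇f(x)‖² = (1/(bn))∑_{i=1}^n ‖∇fᵢ(x) − ∇fᵢ(y)‖² − (1/b)‖∇f(x) − ∇f(y)‖² + ‖v − ∇f(y)‖², where the expectation is over the random batch. (This is the single-batch error identity for the SARAH recursive gradient estimator with previous estimate v at the previous iterate y.) -/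
open Finset
open scoped RealInnerProductSpace

section Aux

variable {E : Type*} [NormedAddCommGroup E] [InnerProductSpace ℝ E]


lemma tuple_reindex {n b : ℕ} (h : (Fin (b + 1) → Fin n) → E) :
    ∑ I : Fin (b + 1) → Fin n, h I
      = ∑ a : Fin n, ∑ J : Fin b → Fin n, h (Fin.cons a J : Fin (b+1) → Fin n) :=
  calc ∑ I : Fin (b + 1) → Fin n, h I
      = ∑ p : Fin n × (Fin b → Fin n), h (Fin.cons p.1 p.2 : Fin (b+1) → Fin n) :=
        Fintype.sum_equiv (Fin.consEquiv (fun _ : Fin (b+1) => Fin n)).symm _ _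
          (fun I => by simp [Fin.consEquiv, Fin.cons_self_tail])
    _ = _ := Fintype.sum_prod_type (fun p => h (Fin.cons p.1 p.2 : Fin (b+1) → Fin n))

lemma sum_tuple_sum (n b : ℕ) (g : Fin n → E) :
    ∑ I : Fin b → Fin n, ∑ j, g (I j)
      = ((b : ℝ) * (n : ℝ) ^ b / (n : ℝ)) • ∑ i, g i := by
  induction b with
  | zero => simp
  | succ b ih =>
    rcases Nat.eq_zero_or_pos n with hn | hn
    · subst hn; simp
    have hn' : (n : ℝ) ≠ 0 := by positivity
    rw [tuple_reindex (fun I => ∑ j, g (I j))]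
    have step : ∀ a : Fin n, ∑ J : Fin b → Fin n,
          ∑ j : Fin (b+1), g ((Fin.cons a J : Fin (b+1) → Fin n) j)
        = ((n : ℝ) ^ b) • g a + ((b : ℝ) * (n : ℝ) ^ b / (n : ℝ)) • ∑ i, g i := by
      intro a
      have h1 : ∀ J : Fin b → Fin n,
          ∑ j : Fin (b+1), g ((Fin.cons a J : Fin (b+1) → Fin n) j)
          = g a + ∑ j : Fin b, g (J j) := fun J => by simp [Fin.sum_univ_succ]
      simp only [h1, Finset.sum_add_distrib, ih, Finset.sum_const, Finset.card_univ,
        Fintype.card_fun, Fintype.card_fin, ← Nat.cast_smul_eq_nsmul ℝ]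
      push_cast
      ring_nf
    simp only [step, Finset.sum_add_distrib, Finset.sum_const, Finset.card_univ,
      Fintype.card_fin, ← Finset.smul_sum, ← Nat.cast_smul_eq_nsmul ℝ, smul_smul]
    rw [← add_smul]
    congr 1
    push_cast
    field_simp
    ring

lemma sum_tuple_normsq (n b : ℕ) (g : Fin n → E) :
    ∑ I : Fin b → Fin n, ‖∑ j, g (I j)‖ ^ 2
      = ((b : ℝ) * (n : ℝ) ^ b / (n : ℝ)) * ∑ i, ‖g i‖ ^ 2
        + ((b : ℝ) * ((b : ℝ) - 1) * (n : ℝ) ^ b / (n : ℝ) ^ 2) * ‖∑ i, g i‖ ^ 2 := by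
  induction b with
  | zero => simp
  | succ b ih =>
    rcases Nat.eq_zero_or_pos n with hn | hn
    · subst hn; simp
    have hn' : (n : ℝ) ≠ 0 := by positivity
    have hre : ∑ I : Fin (b+1) → Fin n, ‖∑ j, g (I j)‖ ^ 2
        = ∑ a : Fin n, ∑ J : Fin b → Fin n,
            ‖∑ j : Fin (b+1), g ((Fin.cons a J : Fin (b+1) → Fin n) j)‖ ^ 2 := by
      have := tuple_reindex (E := ℝ) (fun I : Fin (b+1) → Fin n => ‖∑ j, g (I j)‖ ^ 2)
      exact this
    rw [hre]
    have step : ∀ a : Fin n, ∑ J : Fin b → Fin n,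
          ‖∑ j : Fin (b+1), g ((Fin.cons a J : Fin (b+1) → Fin n) j)‖ ^ 2
        = ((n : ℝ) ^ b) * ‖g a‖ ^ 2
          + 2 * ((b : ℝ) * (n : ℝ) ^ b / (n : ℝ)) * ⟪g a, ∑ i, g i⟫
          + (((b : ℝ) * (n : ℝ) ^ b / (n : ℝ)) * ∑ i, ‖g i‖ ^ 2
            + ((b : ℝ) * ((b : ℝ) - 1) * (n : ℝ) ^ b / (n : ℝ) ^ 2) * ‖∑ i, g i‖ ^ 2) := by
      intro a
      have h1 : ∀ J : Fin b → Fin n,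
          ‖∑ j : Fin (b+1), g ((Fin.cons a J : Fin (b+1) → Fin n) j)‖ ^ 2
          = ‖g a‖ ^ 2 + 2 * ⟪g a, ∑ j : Fin b, g (J j)⟫ + ‖∑ j : Fin b, g (J j)‖ ^ 2 := by
        intro J
        have : ∑ j : Fin (b+1), g ((Fin.cons a J : Fin (b+1) → Fin n) j)
            = g a + ∑ j : Fin b, g (J j) := by simp [Fin.sum_univ_succ]
        rw [this, norm_add_sq_real]
      simp only [h1, Finset.sum_add_distrib, ih, Finset.sum_const, Finset.card_univ,
        Fintype.card_fun, Fintype.card_fin, nsmul_eq_mul]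
      congr 1
      · congr 1
        · push_cast; ring
        rw [← Finset.mul_sum, ← inner_sum, sum_tuple_sum, real_inner_smul_right]
        ring
    simp only [step, Finset.sum_add_distrib, Finset.sum_const, Finset.card_univ,
      Fintype.card_fin, ← Finset.mul_sum, ← Finset.sum_mul, nsmul_eq_mul]
    rw [← real_inner_self_eq_norm_sq (∑ i, g i), ← sum_inner]
    rw [real_inner_self_eq_norm_sq]
    push_cast
    field_simp
    ring

end Aux

lemma grad_avg {d n : ℕ} (f : Fin n → EuclideanSpace ℝ (Fin d) → ℝ)
    (hf : ∀ i, Differentiable ℝ (f i)) (w : EuclideanSpace ℝ (Fin d)) :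
    gradient (fun w => (1 / (n : ℝ)) * ∑ i, f i w) w
      = (1 / (n : ℝ)) • ∑ i, gradient (f i) w := by
  have hsum : DifferentiableAt ℝ (fun w => ∑ i, f i w) w :=
    DifferentiableAt.fun_sum (fun i _ => (hf i).differentiableAt)
  have h1 : fderiv ℝ (fun w => (1 / (n : ℝ)) * ∑ i, f i w) w
      = (1 / (n : ℝ)) • ∑ i, fderiv ℝ (f i) w := by
    rw [fderiv_const_mul hsum, fderiv_fun_sum (fun i _ => (hf i).differentiableAt)]
  simp only [gradient, h1, map_smulₛₗ, map_sum, starRingEnd_apply, star_trivial]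

/-- Single-batch error identity for the SARAH recursive gradient estimator.
`f = (1/n) ∑ᵢ fᵢ`, `v ∈ ℝ^d` arbitrary (the previous estimate at the previous iterate `y`), and
`I = (i₁, …, i_b)` a batch of indices drawn independently and uniformly from `{1, …, n}`
(expectation = average over all `n^b` tuples). Then
`E ‖(1/b) ∑ⱼ (∇f_{iⱼ}(x) − ∇f_{iⱼ}(y)) + v − ∇f(x)‖²
  = (1/(bn)) ∑ᵢ ‖∇fᵢ(x) − ∇fᵢ(y)‖² − (1/b) ‖∇f(x) − ∇f(y)‖² + ‖v − ∇f(y)‖²`. -/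
theorem stmt_5 (d n b : ℕ) (hn : 0 < n) (hb : 0 < b)
    (f : Fin n → EuclideanSpace ℝ (Fin d) → ℝ)
    (hf : ∀ i, Differentiable ℝ (f i))
    (F : EuclideanSpace ℝ (Fin d) → ℝ)
    (hF : F = fun w => (1 / (n : ℝ)) * ∑ i, f i w)
    (x y v : EuclideanSpace ℝ (Fin d)) :
    (1 / (n : ℝ) ^ b) *
        ∑ I : Fin b → Fin n,
          ‖(1 / (b : ℝ)) • (∑ j, (gradient (f (I j)) x - gradient (f (I j)) y)) + v -
            gradient F x‖ ^ 2 =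
      (1 / ((b : ℝ) * (n : ℝ))) * ∑ i, ‖gradient (f i) x - gradient (f i) y‖ ^ 2 -
        (1 / (b : ℝ)) * ‖gradient F x - gradient F y‖ ^ 2 + ‖v - gradient F y‖ ^ 2 := by
  have hn' : (n : ℝ) ≠ 0 := by positivity
  have hb' : (b : ℝ) ≠ 0 := by positivity
  set g : Fin n → EuclideanSpace ℝ (Fin d) := fun i => gradient (f i) x - gradient (f i) y with hg
  set G : EuclideanSpace ℝ (Fin d) := gradient F x - gradient F y with hGdef
  set c : EuclideanSpace ℝ (Fin d) := v - gradient F y with hcdef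
  have hgx : gradient F x = (1 / (n : ℝ)) • ∑ i, gradient (f i) x := by
    rw [hF]; exact grad_avg f hf x
  have hgy : gradient F y = (1 / (n : ℝ)) • ∑ i, gradient (f i) y := by
    rw [hF]; exact grad_avg f hf y
  have hsumg : ∑ i, g i = (n : ℝ) • G := by
    rw [hGdef, hgx, hgy, ← smul_sub, smul_smul, ← Finset.sum_sub_distrib]
    rw [mul_one_div, div_self hn', one_smul]
  set S : (Fin b → Fin n) → EuclideanSpace ℝ (Fin d) := fun I => ∑ j, g (I j) with hS
  have e1 : ∀ I : Fin b → Fin n,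
      ‖(1 / (b : ℝ)) • S I + v - gradient F x‖ ^ 2
        = (1 / (b : ℝ))^2 * ‖S I‖ ^ 2 - (2 / b) * ⟪S I, G⟫ + ‖G‖ ^ 2
          + (2 / b) * ⟪S I, c⟫ - 2 * ⟪G, c⟫ + ‖c‖ ^ 2 := by
    intro I
    have hv : (1 / (b : ℝ)) • S I + v - gradient F x
        = ((1 / (b : ℝ)) • S I - G) + c := by
      rw [hGdef, hcdef]; abel
    rw [hv, norm_add_sq_real, norm_sub_sq_real]
    simp only [inner_sub_left, real_inner_smul_left, norm_smul, Real.norm_eq_abs,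
      abs_of_nonneg (by positivity : (0:ℝ) ≤ 1 / (b:ℝ))]
    ring
  have hcard : (Fintype.card (Fin b → Fin n) : ℝ) = (n : ℝ) ^ b := by
    simp [Fintype.card_fun]
  have hS2 : ∑ I : Fin b → Fin n, ‖S I‖ ^ 2
      = ((b : ℝ) * (n : ℝ) ^ b / (n : ℝ)) * ∑ i, ‖g i‖ ^ 2
        + ((b : ℝ) * ((b : ℝ) - 1) * (n : ℝ) ^ b / (n : ℝ) ^ 2)
          * ((n : ℝ) ^ 2 * ‖G‖ ^ 2) := by
    rw [hS]
    rw [sum_tuple_normsq n b g, hsumg, norm_smul]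
    simp only [Real.norm_eq_abs, abs_of_nonneg (by positivity : (0:ℝ) ≤ (n:ℝ))]
    ring
  have hSsum : ∑ I : Fin b → Fin n, S I = ((b : ℝ) * (n : ℝ) ^ b) • G := by
    rw [hS, sum_tuple_sum n b g, hsumg, smul_smul]
    congr 1
    field_simp
  have hSG : ∑ I : Fin b → Fin n, ⟪S I, G⟫ = (b : ℝ) * (n : ℝ) ^ b * ‖G‖ ^ 2 := by
    rw [← sum_inner, hSsum, real_inner_smul_left, real_inner_self_eq_norm_sq]
  have hSc : ∑ I : Fin b → Fin n, ⟪S I, c⟫ = (b : ℝ) * (n : ℝ) ^ b * ⟪G, c⟫ := by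
    rw [← sum_inner, hSsum, real_inner_smul_left]
  calc (1 / (n : ℝ) ^ b) * ∑ I : Fin b → Fin n,
        ‖(1 / (b : ℝ)) • S I + v - gradient F x‖ ^ 2
      = (1 / (n : ℝ) ^ b) * ∑ I : Fin b → Fin n,
          ((1 / (b : ℝ))^2 * ‖S I‖ ^ 2 - (2 / b) * ⟪S I, G⟫ + ‖G‖ ^ 2
            + (2 / b) * ⟪S I, c⟫ - 2 * ⟪G, c⟫ + ‖c‖ ^ 2) := by
        rw [Finset.sum_congr rfl (fun I _ => e1 I)]
    _ = (1 / (n : ℝ) ^ b) *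
          ((1 / (b : ℝ))^2 * (∑ I : Fin b → Fin n, ‖S I‖ ^ 2)
            - (2 / b) * (∑ I : Fin b → Fin n, ⟪S I, G⟫)
            + (n : ℝ) ^ b * ‖G‖ ^ 2
            + (2 / b) * (∑ I : Fin b → Fin n, ⟪S I, c⟫)
            - (n : ℝ) ^ b * (2 * ⟪G, c⟫) + (n : ℝ) ^ b * ‖c‖ ^ 2) := by
        simp only [Finset.sum_add_distrib, Finset.sum_sub_distrib, ← Finset.mul_sum,
          Finset.sum_const, Finset.card_univ, nsmul_eq_mul, hcard]
        push_cast
        ring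
    _ = (1 / ((b : ℝ) * (n : ℝ))) * ∑ i, ‖g i‖ ^ 2
          - (1 / (b : ℝ)) * ‖G‖ ^ 2 + ‖c‖ ^ 2 := by
        rw [hS2, hSG, hSc]
        have hnb : (n : ℝ) ^ b ≠ 0 := by positivity
        field_simp
        ring
end

section
/- Let f : ℝ^d → ℝ be differentiable with L-Lipschitz gradient (L ≥ 0), let r : ℝ^d → ℝ ∪ {+∞} be proper, and let u : ℝ^d × ℝ^d → ℝ ∪ {+∞} be a surrogate of r such that u(·, z) is convex. Set F = f + r, let μ > 0 and η > 0, fix z ∈ ℝ^d with r(z) < +∞ and g ∈ ℝ^d, and suppose x⁺ is a global minimizer over ℝ^d of the function x ↦ (μ/2)‖x − z‖² + ⟨g, x⟩ + u(x, z). Then F(x⁺) + ((2μ − L)/2 − 1/(2η))‖x⁺ − z‖² ≤ F(z) + (η/2)‖g − ∇f(z)‖². -/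
open scoped RealInnerProductSpace

lemma descent_aux {d : ℕ} (L : ℝ)
    (f : EuclideanSpace ℝ (Fin d) → ℝ) (hf : Differentiable ℝ f)
    (hlip : ∀ x y : EuclideanSpace ℝ (Fin d),
      ‖gradient f x - gradient f y‖ ≤ L * ‖x - y‖)
    (z v : EuclideanSpace ℝ (Fin d)) :
    f (z + v) ≤ f z + ⟪gradient f z, v⟫ + L / 2 * ‖v‖ ^ 2 := by
  set h : ℝ → ℝ := fun t => f (z + t • v) - t * ⟪gradient f z, v⟫ - L * t ^ 2 / 2 * ‖v‖ ^ 2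
    with hh
  have hline : ∀ t : ℝ, HasDerivAt (fun t : ℝ => z + t • v) v t := fun t => by
    simpa using ((hasDerivAt_id t).smul_const v).const_add z
  have hd : ∀ t : ℝ, HasDerivAt h
      (⟪gradient f (z + t • v), v⟫ - ⟪gradient f z, v⟫ - L * t * ‖v‖ ^ 2) t := by
    intro t
    have h1 : HasDerivAt (fun t : ℝ => f (z + t • v)) ⟪gradient f (z + t • v), v⟫ t := by
      have := (hf (z + t • v)).hasGradientAt.hasFDerivAt.comp_hasDerivAt t (hline t)
      simpa [Function.comp_def] using this
    have h2 : HasDerivAt (fun t : ℝ => t * ⟪gradient f z, v⟫) ⟪gradient f z, v⟫ t := by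
      simpa using (hasDerivAt_id t).mul_const ⟪gradient f z, v⟫
    have h3 : HasDerivAt (fun t : ℝ => L * t ^ 2 / 2 * ‖v‖ ^ 2) (L * t * ‖v‖ ^ 2) t := by
      have : HasDerivAt (fun t : ℝ => t ^ 2) (2 * t) t := by simpa using hasDerivAt_pow 2 t
      have := ((this.const_mul L).div_const 2).mul_const (‖v‖ ^ 2)
      rw [show L * t * ‖v‖ ^ 2 = L * (2 * t) / 2 * ‖v‖ ^ 2 by ring]; exact this
    exact (h1.sub h2).sub h3
  have hanti : AntitoneOn h (Set.Icc (0:ℝ) 1) := by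
    apply antitoneOn_of_deriv_nonpos (convex_Icc 0 1)
    · exact (Differentiable.continuous fun t => (hd t).differentiableAt).continuousOn
    · intro t ht
      exact ((hd t).differentiableAt).differentiableWithinAt
    · intro t ht
      rw [interior_Icc] at ht
      rw [(hd t).deriv]
      have hb : ⟪gradient f (z + t • v) - gradient f z, v⟫ ≤ L * t * ‖v‖ ^ 2 := by
        calc ⟪gradient f (z + t • v) - gradient f z, v⟫
            ≤ ‖gradient f (z + t • v) - gradient f z‖ * ‖v‖ := real_inner_le_norm _ _
          _ ≤ (L * ‖(z + t • v) - z‖) * ‖v‖ :=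
              mul_le_mul_of_nonneg_right (hlip _ _) (norm_nonneg _)
          _ = L * t * ‖v‖ ^ 2 := by
              rw [add_sub_cancel_left, norm_smul, Real.norm_eq_abs, abs_of_pos ht.1]
              ring
      rw [inner_sub_left] at hb
      linarith
  have := hanti (Set.left_mem_Icc.2 zero_le_one) (Set.right_mem_Icc.2 zero_le_one) zero_le_one
  simp only [hh] at this
  simp only [zero_smul, add_zero, one_smul, zero_mul, zero_pow, sub_zero, mul_zero] at this
  nlinarith [this]

set_option maxHeartbeats 1000000 in
/-- One-step descent inequality for the SVRMM update combined with Young's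
inequality. `f : ℝ^d → ℝ` is differentiable with `L`-Lipschitz gradient (`L ≥ 0`);
`r : ℝ^d → ℝ ∪ {+∞}` is proper (here: `EReal`-valued, never `⊥`, finite somewhere);
`u` is a surrogate of `r` (`u(y,y) = r(y)` and `u(x,y) ≥ r(x)`), never `⊥`, with `u(·, z)` convex;
`F = f + r`, `μ > 0`, `η > 0`, `r(z) < +∞`, and `x⁺` is a global minimizer of
`x ↦ (μ/2)‖x − z‖² + ⟨g, x⟩ + u(x, z)`. Then
`F(x⁺) + ((2μ − L)/2 − 1/(2η))‖x⁺ − z‖² ≤ F(z) + (η/2)‖g − ∇f(z)‖²`. -/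
theorem stmt_8 (d : ℕ) (L μ η : ℝ) (hL : 0 ≤ L) (hμ : 0 < μ) (hη : 0 < η)
    (f : EuclideanSpace ℝ (Fin d) → ℝ) (hf : Differentiable ℝ f)
    (hlip : ∀ x y : EuclideanSpace ℝ (Fin d),
      ‖gradient f x - gradient f y‖ ≤ L * ‖x - y‖)
    (r : EuclideanSpace ℝ (Fin d) → EReal)
    (hrbot : ∀ x, r x ≠ ⊥) (hrproper : ∃ x, r x ≠ ⊤)
    (u : EuclideanSpace ℝ (Fin d) → EuclideanSpace ℝ (Fin d) → EReal)
    (hubot : ∀ x y, u x y ≠ ⊥)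
    (hu1 : ∀ y, u y y = r y)
    (hu2 : ∀ x y, r x ≤ u x y)
    (z : EuclideanSpace ℝ (Fin d)) (hz : r z < ⊤)
    (huconv : ∀ a b : EuclideanSpace ℝ (Fin d), ∀ s t : ℝ, 0 ≤ s → 0 ≤ t → s + t = 1 →
      u (s • a + t • b) z ≤ (s : EReal) * u a z + (t : EReal) * u b z)
    (g xp : EuclideanSpace ℝ (Fin d))
    (hxp : ∀ x : EuclideanSpace ℝ (Fin d),
      ((μ / 2 * ‖xp - z‖ ^ 2 + ⟪g, xp⟫ : ℝ) : EReal) + u xp z ≤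
        ((μ / 2 * ‖x - z‖ ^ 2 + ⟪g, x⟫ : ℝ) : EReal) + u x z) :
    ((f xp : ℝ) : EReal) + r xp +
        ((((2 * μ - L) / 2 - 1 / (2 * η)) * ‖xp - z‖ ^ 2 : ℝ) : EReal) ≤
      ((f z : ℝ) : EReal) + r z + ((η / 2 * ‖g - gradient f z‖ ^ 2 : ℝ) : EReal) := by
  set q : ℝ := ‖xp - z‖ ^ 2 with hq
  have hq0 : 0 ≤ q := by positivity
  -- r z is real
  set Rz : ℝ := (r z).toReal with hRzdef
  have hRz : r z = (Rz : EReal) := ((r z).coe_toReal hz.ne (hrbot z)).symm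
  -- u xp z is real
  have hutop : u xp z ≠ ⊤ := by
    intro htop
    have h0 := hxp z
    rw [htop, hu1 z, hRz] at h0
    have : ((μ / 2 * ‖xp - z‖ ^ 2 + ⟪g, xp⟫ : ℝ) : EReal) + ⊤ = ⊤ :=
      EReal.add_top_of_ne_bot (EReal.coe_ne_bot _)
    rw [this] at h0
    have h1 : ((μ / 2 * ‖z - z‖ ^ 2 + ⟪g, z⟫ : ℝ) : EReal) + (Rz : EReal) < ⊤ := by
      rw [← EReal.coe_add]; exact EReal.coe_lt_top _
    exact absurd (top_le_iff.mp h0) h1.ne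
  set A : ℝ := (u xp z).toReal with hAdef
  have hA : u xp z = (A : EReal) := ((u xp z).coe_toReal hutop (hubot xp z)).symm
  -- r xp is real and ≤ A
  have hrxptop : r xp ≠ ⊤ := fun htop => hutop (top_le_iff.mp (htop ▸ hu2 xp z))
  set Rxp : ℝ := (r xp).toReal with hRxpdef
  have hRxp : r xp = (Rxp : EReal) := ((r xp).coe_toReal hrxptop (hrbot xp)).symm
  have hRxpA : Rxp ≤ A := by
    have := hu2 xp z
    rw [hRxp, hA] at this
    exact_mod_cast this
  -- key strong convexity inequality
  have hkey : A + μ * q ≤ Rz + (⟪g, z⟫ - ⟪g, xp⟫) := by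
    apply le_of_forall_pos_le_add
    intro ε hε
    set t : ℝ := min 1 (ε / (μ / 2 * q + 1)) with htdef
    have hden : (0:ℝ) < μ / 2 * q + 1 := by positivity
    have ht0 : 0 < t := lt_min one_pos (div_pos hε hden)
    have ht1 : t ≤ 1 := min_le_left _ _
    have hts : μ / 2 * q * t ≤ ε := by
      have h2 : t ≤ ε / (μ / 2 * q + 1) := min_le_right _ _
      rw [le_div_iff₀ hden] at h2
      nlinarith
    set xt : EuclideanSpace ℝ (Fin d) := (1 - t) • xp + t • z with hxt
    have hconv : u xt z ≤ (((1 - t) * A + t * Rz : ℝ) : EReal) := by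
      have := huconv xp z (1 - t) t (by linarith) ht0.le (by ring)
      rw [hA, hu1 z, hRz] at this
      push_cast
      exact this
    have hbig : ((μ / 2 * q + ⟪g, xp⟫ + A : ℝ) : EReal) ≤
        ((μ / 2 * ‖xt - z‖ ^ 2 + ⟪g, xt⟫ + ((1 - t) * A + t * Rz) : ℝ) : EReal) := by
      have h0 := hxp xt
      rw [hA] at h0
      push_cast
      calc ((μ / 2 * q + ⟪g, xp⟫ : ℝ) : EReal) + (A : EReal)
          ≤ ((μ / 2 * ‖xt - z‖ ^ 2 + ⟪g, xt⟫ : ℝ) : EReal) + u xt z := h0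
        _ ≤ ((μ / 2 * ‖xt - z‖ ^ 2 + ⟪g, xt⟫ : ℝ) : EReal) +
              (((1 - t) * A + t * Rz : ℝ) : EReal) := add_le_add le_rfl hconv
        _ = _ := by push_cast; ring_nf
    have hreal : μ / 2 * q + ⟪g, xp⟫ + A ≤
        μ / 2 * ‖xt - z‖ ^ 2 + ⟪g, xt⟫ + ((1 - t) * A + t * Rz) := by
      exact_mod_cast hbig
    have hnorm : ‖xt - z‖ ^ 2 = (1 - t) ^ 2 * q := by
      have : xt - z = (1 - t) • (xp - z) := by
        rw [hxt]; module
      rw [this, norm_smul, Real.norm_eq_abs, mul_pow, sq_abs, hq]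
    have hinner : ⟪g, xt⟫ = (1 - t) * ⟪g, xp⟫ + t * ⟪g, z⟫ := by
      rw [hxt, inner_add_right, real_inner_smul_right, real_inner_smul_right]
    rw [hnorm, hinner] at hreal
    have hX : 0 ≤ t * (Rz + ⟪g, z⟫ - ⟪g, xp⟫ - A - μ * q + μ / 2 * q * t) := by
      nlinarith [hreal]
    have hX2 : 0 ≤ Rz + ⟪g, z⟫ - ⟪g, xp⟫ - A - μ * q + μ / 2 * q * t := by
      by_contra hc
      push_neg at hc
      nlinarith [mul_pos ht0 (neg_pos.2 hc)]
    linarith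
  -- descent lemma
  have hdesc : f xp ≤ f z + ⟪gradient f z, xp - z⟫ + L / 2 * q := by
    have := descent_aux L f hf hlip z (xp - z)
    rwa [add_sub_cancel] at this
  -- Young's inequality
  have hyoung : ⟪gradient f z - g, xp - z⟫ ≤
      η / 2 * ‖g - gradient f z‖ ^ 2 + 1 / (2 * η) * q := by
    have h1 : ⟪gradient f z - g, xp - z⟫ ≤ ‖gradient f z - g‖ * ‖xp - z‖ :=
      real_inner_le_norm _ _
    have h2 : ‖gradient f z - g‖ = ‖g - gradient f z‖ := norm_sub_rev _ _
    rw [h2] at h1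
    have h3 : 0 ≤ (η * ‖g - gradient f z‖ - ‖xp - z‖) ^ 2 := sq_nonneg _
    have h2η : (0:ℝ) < 2 * η := by linarith
    rw [hq, ← sub_nonneg]
    set a := ‖g - gradient f z‖ with ha
    set b := ‖xp - z‖ with hb
    set c := ⟪gradient f z - g, xp - z⟫ with hc
    have key : 0 ≤ 2 * η * (η / 2 * a ^ 2 + 1 / (2 * η) * b ^ 2 - c) := by
      have hexp : 2 * η * (η / 2 * a ^ 2 + 1 / (2 * η) * b ^ 2 - c)
          = η ^ 2 * a ^ 2 + b ^ 2 - 2 * η * c := by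
        field_simp
      rw [hexp]
      nlinarith [h3, mul_le_mul_of_nonneg_left h1 h2η.le]
    exact nonneg_of_mul_nonneg_right key h2η
  -- combine
  rw [hRxp, hRz]
  rw [← EReal.coe_add, ← EReal.coe_add, ← EReal.coe_add, ← EReal.coe_add,
    EReal.coe_le_coe_iff]
  rw [inner_sub_left, inner_sub_right, inner_sub_right] at hyoung
  rw [inner_sub_right] at hdesc
  have h2η : 0 < 2 * η := by linarith
  linarith [hkey, hdesc, hyoung, hRxpA]
end
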